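/- Let Δ ∈ ℝ, N ≥ 2, Y = (y_1 < ⋯ < y_N) ∈ ℤ^N, r > 0 with r² + 2|Δ|r < 1, and let u : ℤ^N × ℝ → ℂ be defined by u(x;t) = Σ_{σ ∈ S_N} (2πi)^{-N} ∮_{C_r}⋯∮_{C_r} A_σ(ξ) ∏_{i=1}^N ξ_{σ(i)}^{x_i} ∏_{i=1}^N ξ_i^{-y_i-1} e^{-itε(ξ_i)} dξ_1⋯dξ_N for arbitrary x ∈ ℤ^N. Then u satisfies the two-body boundary conditions: for every t ∈ ℝ, every j ∈ {1, …, N-1}, every a ∈ ℤ and every choice of the remaining coordinates, u(…, a, a, …; t) + u(…, a+1, a+1, …; t) = 2Δ·u(…, a, a+1, …; t), where the displayed entries are the j-th and (j+1)-th coordinates and the other coordinates are the same in all three terms. -/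

import Mathlib

open scoped Real BigOperators

/-- `(2πi)⁻¹ ∮_{|z - c| = ρ} f(z) dz`, positively oriented circle. -/
noncomputable def cInt (c : ℂ) (ρ : ℝ) (f : ℂ → ℂ) : ℂ :=
  (2 * Real.pi * Complex.I)⁻¹ * ∮ z in C(c, ρ), f z

/-- Iterated contour integral: the `i`-th coordinate is integrated using the
functional `J i`. -/
noncomputable def iterInt : (n : ℕ) → (Fin n → ((ℂ → ℂ) → ℂ)) → ((Fin n → ℂ) → ℂ) → ℂ
  | 0, _, f => f Fin.elim0
  | n + 1, J, f => J 0 fun z => iterInt n (fun i => J i.succ) fun w => f (Fin.cons z w)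

/-- Dispersion relation `ε(ξ) = ξ + ξ⁻¹ - 2Δ`. -/
noncomputable def eps (Δ : ℝ) (ξ : ℂ) : ℂ := ξ + ξ⁻¹ - 2 * (Δ : ℂ)

/-- Yang–Yang S-matrix `S(ξ', ξ) = -(1 + ξξ' - 2Δξ')/(1 + ξξ' - 2Δξ)`. -/
noncomputable def Smat (Δ : ℂ) (ξ' ξ : ℂ) : ℂ :=
  -(1 + ξ * ξ' - 2 * Δ * ξ') / (1 + ξ * ξ' - 2 * Δ * ξ)

/-- `A_σ(ξ)`: the product of `S(ξ_β, ξ_α)` over inversions of `σ`, i.e. over all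
pairs `α < β` such that `β` appears before `α` in the list `(σ(1), …, σ(N))`. -/
noncomputable def Acoef {N : ℕ} (Δ : ℂ) (σ : Equiv.Perm (Fin N)) (ξ : Fin N → ℂ) : ℂ :=
  ∏ p ∈ Finset.univ.filter
      (fun p : Fin N × Fin N => p.1 < p.2 ∧ σ.symm p.2 < σ.symm p.1),
    Smat Δ (ξ p.2) (ξ p.1)

/-- The Bethe ansatz wave function `ψ_N(X; t)` with initial condition `Y = y`,
on small contours of radius `r`. -/
noncomputable def psi (Δ : ℝ) (N : ℕ) (r : ℝ) (y : Fin N → ℤ) (x : Fin N → ℤ) (t : ℝ) : ℂ :=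
  ∑ σ : Equiv.Perm (Fin N),
    iterInt N (fun _ => cInt 0 r) fun ξ =>
      Acoef (Δ : ℂ) σ ξ * (∏ i, ξ (σ i) ^ x i) *
        ∏ i, ξ i ^ (-y i - 1) * Complex.exp (-Complex.I * (t : ℂ) * eps Δ (ξ i))


lemma cInt_congr {r : ℝ} (hr : 0 < r) {f g : ℂ → ℂ}
    (h : ∀ z : ℂ, ‖z‖ = r → f z = g z) : cInt 0 r f = cInt 0 r g := by
  unfold cInt
  congr 1
  refine circleIntegral.integral_congr hr.le fun z hz => h z ?_
  simpa using hz

lemma cInt_add {r : ℝ} {f g : ℂ → ℂ}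
    (hf : Continuous fun θ : ℝ => f (circleMap 0 r θ))
    (hg : Continuous fun θ : ℝ => g (circleMap 0 r θ)) :
    cInt 0 r (fun z => f z + g z) = cInt 0 r f + cInt 0 r g := by
  unfold cInt circleIntegral
  rw [← mul_add, ← intervalIntegral.integral_add]
  · congr 1
    refine intervalIntegral.integral_congr fun θ _ => ?_
    simp only [deriv_circleMap, smul_eq_mul]
    ring
  · exact (((continuous_circleMap 0 r).mul continuous_const).smul hf).intervalIntegrable _ _
      |>.congr (by
        exact fun θ _ => (congrArg (· • f (circleMap 0 r θ)) (deriv_circleMap 0 r θ)).symm)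
  · exact (((continuous_circleMap 0 r).mul continuous_const).smul hg).intervalIntegrable _ _
      |>.congr (by
        exact fun θ _ => (congrArg (· • g (circleMap 0 r θ)) (deriv_circleMap 0 r θ)).symm)

lemma cInt_const_mul (r : ℝ) (c : ℂ) (f : ℂ → ℂ) :
    cInt 0 r (fun z => c * f z) = c * cInt 0 r f := by
  unfold cInt circleIntegral
  simp only [smul_eq_mul]
  rw [show (fun θ : ℝ => deriv (circleMap 0 r) θ * (c * f (circleMap 0 r θ)))
      = fun θ : ℝ => c * (deriv (circleMap 0 r) θ * f (circleMap 0 r θ)) from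
      funext fun θ => by ring, intervalIntegral.integral_const_mul]
  ring

lemma iterInt_congr {r : ℝ} (hr : 0 < r) : ∀ (n : ℕ) (f g : (Fin n → ℂ) → ℂ),
    (∀ ξ : Fin n → ℂ, (∀ i, ‖ξ i‖ = r) → f ξ = g ξ) →
    iterInt n (fun _ => cInt 0 r) f = iterInt n (fun _ => cInt 0 r) g
  | 0, f, g, h => h _ (fun i => i.elim0)
  | n + 1, f, g, h => by
    show cInt 0 r _ = cInt 0 r _
    refine cInt_congr hr fun z hz => ?_
    refine iterInt_congr hr n _ _ fun w hw => h _ fun i => ?_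
    refine Fin.cases ?_ ?_ i
    · simpa using hz
    · intro k; simpa using hw k

lemma circleMap_comp_cons {n : ℕ} (r : ℝ) (t : ℝ) (ψ : Fin n → ℝ) :
    (fun i : Fin (n + 1) => circleMap 0 r ((Fin.cons t ψ : Fin (n+1) → ℝ) i))
      = Fin.cons (circleMap 0 r t) (fun i => circleMap 0 r (ψ i)) := by
  funext i
  refine Fin.cases rfl (fun k => ?_) i
  simp

lemma continuous_cons_aux {X : Type*} [TopologicalSpace X] {n : ℕ}
    {u : X → ℝ} {v : X → Fin n → ℝ} (hu : Continuous u) (hv : Continuous v) :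
    Continuous fun q : X => (Fin.cons (u q) (v q) : Fin (n + 1) → ℝ) := by
  refine continuous_pi fun i => ?_
  refine Fin.cases ?_ (fun k => ?_) i
  · simpa using hu
  · exact (continuous_apply k).comp hv

lemma iterInt_cont {X : Type*} [TopologicalSpace X] {r : ℝ} :
    ∀ (n : ℕ) (f : X → (Fin n → ℂ) → ℂ),
    (Continuous fun p : X × (Fin n → ℝ) => f p.1 (fun i => circleMap 0 r (p.2 i))) →
    Continuous fun x => iterInt n (fun _ => cInt 0 r) (f x)
  | 0, f, h => by
    show Continuous fun x => f x Fin.elim0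
    have h0 : Continuous fun x : X => f x (fun i : Fin 0 => circleMap 0 r ((fun _ => (0:ℝ)) i)) :=
      h.comp (continuous_id.prodMk continuous_const)
    have e : (fun i : Fin 0 => circleMap 0 r ((fun _ => (0:ℝ)) i)) = Fin.elim0 :=
      funext fun i => i.elim0
    rwa [e] at h0
  | n + 1, f, h => by
    show Continuous fun x => cInt 0 r fun z =>
      iterInt n (fun _ => cInt 0 r) fun w => f x (Fin.cons z w)
    unfold cInt circleIntegral
    refine continuous_const.mul ?_
    refine intervalIntegral.continuous_parametric_intervalIntegral_of_continuous' ?_ 0 (2 * π)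
    have inner : Continuous fun q : (X × ℝ) =>
        iterInt n (fun _ => cInt 0 r) fun w => f q.1 (Fin.cons (circleMap 0 r q.2) w) := by
      refine iterInt_cont (X := X × ℝ) n (fun q w => f q.1 (Fin.cons (circleMap 0 r q.2) w)) ?_
      have : Continuous fun p : (X × ℝ) × (Fin n → ℝ) => (p.1.1, (Fin.cons p.1.2 p.2 : Fin (n+1) → ℝ)) :=
        (continuous_fst.comp continuous_fst).prodMk
          (continuous_cons_aux (continuous_snd.comp continuous_fst) continuous_snd)
      have := h.comp this
      simp only [Function.comp_def] at this
      simpa only [circleMap_comp_cons] using this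
    have : Continuous fun q : X × ℝ =>
        deriv (circleMap 0 r) q.2 • iterInt n (fun _ => cInt 0 r)
          fun w => f q.1 (Fin.cons (circleMap 0 r q.2) w) := by
      simp only [deriv_circleMap, smul_eq_mul]
      exact (((continuous_circleMap 0 r).comp continuous_snd).mul continuous_const).mul inner
    exact this

lemma iterInt_const_mul (r : ℝ) (c : ℂ) : ∀ (n : ℕ) (f : (Fin n → ℂ) → ℂ),
    iterInt n (fun _ => cInt 0 r) (fun ξ => c * f ξ)
      = c * iterInt n (fun _ => cInt 0 r) f
  | 0, f => rfl
  | n + 1, f => by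
    show cInt 0 r _ = c * cInt 0 r _
    rw [← cInt_const_mul]
    congr 1
    funext z
    exact iterInt_const_mul r c n fun w => f (Fin.cons z w)

lemma iterInt_zero (r : ℝ) (n : ℕ) :
    iterInt n (fun _ => cInt 0 r) (fun _ => (0:ℂ)) = 0 := by
  have := iterInt_const_mul r 0 n (fun _ => (1:ℂ))
  simpa using this

lemma iterInt_add {r : ℝ} (hr : 0 < r) : ∀ (n : ℕ) (f g : (Fin n → ℂ) → ℂ),
    (Continuous fun θ : Fin n → ℝ => f (fun i => circleMap 0 r (θ i))) →
    (Continuous fun θ : Fin n → ℝ => g (fun i => circleMap 0 r (θ i))) →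
    iterInt n (fun _ => cInt 0 r) (fun ξ => f ξ + g ξ)
      = iterInt n (fun _ => cInt 0 r) f + iterInt n (fun _ => cInt 0 r) g
  | 0, f, g, hf, hg => rfl
  | n + 1, f, g, hf, hg => by
    show cInt 0 r _ = cInt 0 r _ + cInt 0 r _
    have slice : ∀ t : ℝ, ∀ h : (Fin (n+1) → ℂ) → ℂ,
        (Continuous fun θ : Fin (n+1) → ℝ => h (fun i => circleMap 0 r (θ i))) →
        Continuous fun ψ : Fin n → ℝ =>
          h (Fin.cons (circleMap 0 r t) (fun i => circleMap 0 r (ψ i))) := by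
      intro t h hh
      have hc : Continuous fun ψ : Fin n → ℝ => (Fin.cons t ψ : Fin (n+1) → ℝ) :=
        continuous_cons_aux continuous_const continuous_id
      have := hh.comp hc
      simp only [Function.comp_def] at this
      simpa only [circleMap_comp_cons] using this
    have step1 : cInt 0 r (fun z => iterInt n (fun _ => cInt 0 r)
          fun w => f (Fin.cons z w) + g (Fin.cons z w))
        = cInt 0 r (fun z => (iterInt n (fun _ => cInt 0 r) fun w => f (Fin.cons z w))
            + iterInt n (fun _ => cInt 0 r) fun w => g (Fin.cons z w)) := by
      refine cInt_congr hr fun z hz => ?_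
      have hz' : circleMap 0 r z.arg = z := by
        rw [circleMap, ← hz, zero_add, Complex.norm_mul_exp_arg_mul_I]
      rw [← hz']
      exact iterInt_add hr n _ _ (slice _ f hf) (slice _ g hg)
    rw [step1]
    have contf : Continuous fun t : ℝ => iterInt n (fun _ => cInt 0 r)
        fun w => f (Fin.cons (circleMap 0 r t) w) := by
      refine iterInt_cont (X := ℝ) n (fun t w => f (Fin.cons (circleMap 0 r t) w)) ?_
      have := hf.comp (continuous_cons_aux
        (continuous_fst : Continuous fun p : ℝ × (Fin n → ℝ) => p.1) continuous_snd)
      simp only [Function.comp_def] at this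
      simpa only [circleMap_comp_cons] using this
    have contg : Continuous fun t : ℝ => iterInt n (fun _ => cInt 0 r)
        fun w => g (Fin.cons (circleMap 0 r t) w) := by
      refine iterInt_cont (X := ℝ) n (fun t w => g (Fin.cons (circleMap 0 r t) w)) ?_
      have := hg.comp (continuous_cons_aux
        (continuous_fst : Continuous fun p : ℝ × (Fin n → ℝ) => p.1) continuous_snd)
      simp only [Function.comp_def] at this
      simpa only [circleMap_comp_cons] using this
    exact cInt_add contf contg


lemma swap_val {N j : ℕ} (hj : j + 1 < N) (u : Fin N) :
    ((Equiv.swap (⟨j, Nat.lt_of_succ_lt hj⟩ : Fin N) ⟨j+1, hj⟩ u : Fin N) : ℕ)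
      = if (u:ℕ) = j then j+1 else if (u:ℕ) = j+1 then j else (u:ℕ) := by
  rcases eq_or_ne u ⟨j, Nat.lt_of_succ_lt hj⟩ with rfl | h1
  · simp [Equiv.swap_apply_left]
  · rcases eq_or_ne u ⟨j+1, hj⟩ with rfl | h2
    · rw [Equiv.swap_apply_right]
      simp only [Fin.val_mk]
      split_ifs <;> omega
    · rw [Equiv.swap_apply_of_ne_of_ne h1 h2, if_neg, if_neg]
      · exact fun h => h2 (Fin.ext h)
      · exact fun h => h1 (Fin.ext h)

lemma swap_lt_iff {N j : ℕ} (hj : j + 1 < N) (u v : Fin N) :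
    (Equiv.swap (⟨j, Nat.lt_of_succ_lt hj⟩ : Fin N) ⟨j+1, hj⟩ u
        < Equiv.swap (⟨j, Nat.lt_of_succ_lt hj⟩ : Fin N) ⟨j+1, hj⟩ v)
      ↔ (((u:ℕ) = j+1 ∧ (v:ℕ) = j) ∨ ((u:ℕ) < (v:ℕ) ∧ ¬((u:ℕ) = j ∧ (v:ℕ) = j+1))) := by
  rw [Fin.lt_def, swap_val hj u, swap_val hj v]
  have hu := u.isLt; have hv := v.isLt
  split_ifs <;> omega

lemma filter_swap {N j : ℕ} (hj : j + 1 < N) (σ : Equiv.Perm (Fin N))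
    (hσ : σ ⟨j, Nat.lt_of_succ_lt hj⟩ < σ ⟨j+1, hj⟩) :
    Finset.univ.filter (fun p : Fin N × Fin N => p.1 < p.2 ∧
        (σ * Equiv.swap (⟨j, Nat.lt_of_succ_lt hj⟩ : Fin N) ⟨j+1, hj⟩).symm p.2
          < (σ * Equiv.swap (⟨j, Nat.lt_of_succ_lt hj⟩ : Fin N) ⟨j+1, hj⟩).symm p.1)
      = insert (σ ⟨j, Nat.lt_of_succ_lt hj⟩, σ ⟨j+1, hj⟩)
          (Finset.univ.filter (fun p : Fin N × Fin N =>
            p.1 < p.2 ∧ σ.symm p.2 < σ.symm p.1)) := by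
  have hsymm : ∀ p : Fin N,
      (σ * Equiv.swap (⟨j, Nat.lt_of_succ_lt hj⟩ : Fin N) ⟨j+1, hj⟩).symm p
        = Equiv.swap (⟨j, Nat.lt_of_succ_lt hj⟩ : Fin N) ⟨j+1, hj⟩ (σ.symm p) := by
    intro p
    rw [Equiv.symm_apply_eq]
    simp [Equiv.Perm.mul_apply, Equiv.swap_apply_self]
  ext p
  simp only [Finset.mem_filter, Finset.mem_univ, true_and, Finset.mem_insert, hsymm,
    swap_lt_iff hj]
  constructor
  · rintro ⟨h12, (⟨h2, h1⟩ | ⟨hlt, _⟩)⟩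
    · left
      have e2 : σ.symm p.2 = ⟨j+1, hj⟩ := Fin.ext h2
      have e1 : σ.symm p.1 = ⟨j, Nat.lt_of_succ_lt hj⟩ := Fin.ext h1
      have f2 : p.2 = σ ⟨j+1, hj⟩ := by rw [← e2, Equiv.apply_symm_apply]
      have f1 : p.1 = σ ⟨j, Nat.lt_of_succ_lt hj⟩ := by rw [← e1, Equiv.apply_symm_apply]
      exact Prod.ext f1 f2
    · right; exact ⟨h12, Fin.lt_def.mpr hlt⟩
  · rintro (rfl | ⟨h12, hinv⟩)
    · refine ⟨hσ, Or.inl ⟨?_, ?_⟩⟩ <;> simp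
    · refine ⟨h12, Or.inr ⟨Fin.lt_def.mp hinv, ?_⟩⟩
      rintro ⟨ha, hb⟩
      have e2 : σ.symm p.2 = ⟨j, Nat.lt_of_succ_lt hj⟩ := Fin.ext ha
      have e1 : σ.symm p.1 = ⟨j+1, hj⟩ := Fin.ext hb
      have f2 : p.2 = σ ⟨j, Nat.lt_of_succ_lt hj⟩ := by rw [← e2, Equiv.apply_symm_apply]
      have f1 : p.1 = σ ⟨j+1, hj⟩ := by rw [← e1, Equiv.apply_symm_apply]
      rw [f1, f2] at h12
      exact absurd hσ (not_lt.mpr h12.le)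

lemma notmem_filter {N j : ℕ} (hj : j + 1 < N) (σ : Equiv.Perm (Fin N))
    (hσ : σ ⟨j, Nat.lt_of_succ_lt hj⟩ < σ ⟨j+1, hj⟩) :
    (σ ⟨j, Nat.lt_of_succ_lt hj⟩, σ ⟨j+1, hj⟩) ∉
      Finset.univ.filter (fun p : Fin N × Fin N =>
        p.1 < p.2 ∧ σ.symm p.2 < σ.symm p.1) := by
  simp only [Finset.mem_filter, Finset.mem_univ, true_and, Equiv.symm_apply_apply, not_and]
  intro _
  rw [not_lt, Fin.le_def]
  simp

noncomputable def Fint (Δ : ℝ) (N : ℕ) (y : Fin N → ℤ) (t : ℝ)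
    (σ : Equiv.Perm (Fin N)) (v : Fin N → ℤ) : (Fin N → ℂ) → ℂ := fun ξ =>
  Acoef (Δ : ℂ) σ ξ * (∏ i, ξ (σ i) ^ v i) *
    ∏ i, ξ i ^ (-y i - 1) * Complex.exp (-Complex.I * (t : ℂ) * eps Δ (ξ i))

lemma prod_update {N j : ℕ} (hj : j + 1 < N) (x : Fin N → ℤ) (σ : Equiv.Perm (Fin N))
    (ξ : Fin N → ℂ) (b c : ℤ) :
    (∏ i, ξ (σ i) ^ (Function.update (Function.update x ⟨j, Nat.lt_of_succ_lt hj⟩ b) ⟨j+1, hj⟩ c i))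
      = ξ (σ ⟨j, Nat.lt_of_succ_lt hj⟩) ^ b * ξ (σ ⟨j+1, hj⟩) ^ c *
        ∏ i ∈ (Finset.univ.erase (⟨j, Nat.lt_of_succ_lt hj⟩ : Fin N)).erase ⟨j+1, hj⟩,
          ξ (σ i) ^ x i := by
  have hJJ : (⟨j, Nat.lt_of_succ_lt hj⟩ : Fin N) ≠ ⟨j+1, hj⟩ := by simp [Fin.ext_iff]
  rw [← Finset.mul_prod_erase Finset.univ _ (Finset.mem_univ (⟨j, Nat.lt_of_succ_lt hj⟩ : Fin N)),
      ← Finset.mul_prod_erase _ _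
        (Finset.mem_erase.mpr ⟨hJJ.symm, Finset.mem_univ (⟨j+1, hj⟩ : Fin N)⟩)]
  have e1 : Function.update (Function.update x ⟨j, Nat.lt_of_succ_lt hj⟩ b) ⟨j+1, hj⟩ c ⟨j, Nat.lt_of_succ_lt hj⟩ = b := by
    rw [Function.update_of_ne hJJ, Function.update_self]
  have e2 : Function.update (Function.update x ⟨j, Nat.lt_of_succ_lt hj⟩ b) ⟨j+1, hj⟩ c ⟨j+1, hj⟩ = c :=
    Function.update_self _ _ _
  rw [e1, e2]
  have e3 : (∏ i ∈ (Finset.univ.erase (⟨j, Nat.lt_of_succ_lt hj⟩ : Fin N)).erase ⟨j+1, hj⟩,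
        ξ (σ i) ^ (Function.update (Function.update x ⟨j, Nat.lt_of_succ_lt hj⟩ b) ⟨j+1, hj⟩ c i))
      = ∏ i ∈ (Finset.univ.erase (⟨j, Nat.lt_of_succ_lt hj⟩ : Fin N)).erase ⟨j+1, hj⟩, ξ (σ i) ^ x i := by
    refine Finset.prod_congr rfl fun i hi => ?_
    obtain ⟨hi2, hi1⟩ := Finset.mem_erase.mp hi
    obtain ⟨hi1', _⟩ := Finset.mem_erase.mp hi1
    rw [Function.update_of_ne hi2, Function.update_of_ne hi1']
  rw [e3]
  ring

lemma hden {Δ r : ℝ} (hr : 0 < r) (hr1 : r ^ 2 + 2 * |Δ| * r < 1) {z w : ℂ}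
    (hz : ‖z‖ = r) (hw : ‖w‖ = r) :
    1 + z * w - 2 * (Δ : ℂ) * z ≠ 0 := by
  intro h
  have h2 : z * w - 2 * (Δ : ℂ) * z = -1 := by linear_combination h
  have h3 : ‖z * w - 2 * (Δ : ℂ) * z‖ = 1 := by rw [h2]; simp
  have h4 : ‖z * w - 2 * (Δ : ℂ) * z‖ ≤ r ^ 2 + 2 * |Δ| * r := by
    calc ‖z * w - 2 * (Δ : ℂ) * z‖ = ‖z * w - 2 * (Δ : ℂ) * z‖ := rfl
      _ ≤ ‖z * w‖ + ‖2 * (Δ : ℂ) * z‖ := norm_sub_le _ _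
      _ = r ^ 2 + 2 * |Δ| * r := by
          rw [norm_mul, norm_mul, norm_mul]
          simp only [hz, hw, Complex.norm_real, Real.norm_eq_abs, Complex.norm_two]
          ring
  linarith

lemma hkey {Δ : ℝ} (a : ℤ) {ζ η : ℂ} (hζ : ζ ≠ 0) (hη : η ≠ 0)
    (hD : 1 + ζ * η - 2 * (Δ : ℂ) * ζ ≠ 0) :
    (ζ ^ a * η ^ a + ζ ^ (a + 1) * η ^ (a + 1) - 2 * (Δ : ℂ) * (ζ ^ a * η ^ (a + 1)))
      + Smat (Δ : ℂ) η ζ *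
        (η ^ a * ζ ^ a + η ^ (a + 1) * ζ ^ (a + 1) - 2 * (Δ : ℂ) * (η ^ a * ζ ^ (a + 1))) = 0 := by
  rw [Smat, zpow_add_one₀ hζ, zpow_add_one₀ hη]
  linear_combination (-(ζ ^ a * η ^ a) * (1 + ζ * η - 2 * (Δ:ℂ) * η)) * mul_inv_cancel₀ hD

lemma contFint {Δ r : ℝ} (hr : 0 < r) (hr1 : r ^ 2 + 2 * |Δ| * r < 1)
    {N : ℕ} (y : Fin N → ℤ) (t : ℝ) (σ : Equiv.Perm (Fin N)) (v : Fin N → ℤ) :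
    Continuous fun θ : Fin N → ℝ => Fint Δ N y t σ v (fun i => circleMap 0 r (θ i)) := by
  have hc : ∀ i : Fin N, Continuous fun θ : Fin N → ℝ => circleMap 0 r (θ i) :=
    fun i => (continuous_circleMap 0 r).comp (continuous_apply i)
  have hne : ∀ (θ : Fin N → ℝ) (i : Fin N), circleMap 0 r (θ i) ≠ 0 :=
    fun θ i => circleMap_ne_center hr.ne'
  have habs : ∀ (θ : Fin N → ℝ) (i : Fin N), ‖circleMap 0 r (θ i)‖ = r := by
    intro θ i; rw [norm_circleMap_zero]; exact abs_of_pos hr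
  unfold Fint
  refine Continuous.mul (Continuous.mul ?_ ?_) ?_
  · unfold Acoef
    refine continuous_finset_prod _ fun p _ => ?_
    unfold Smat
    refine Continuous.div ?_ ?_ ?_
    · exact ((continuous_const.add ((hc p.1).mul (hc p.2))).sub
        (continuous_const.mul (hc p.2))).neg
    · exact (continuous_const.add ((hc p.1).mul (hc p.2))).sub
        (continuous_const.mul (hc p.1))
    · exact fun θ => hden hr hr1 (habs θ p.1) (habs θ p.2)
  · exact continuous_finset_prod _ fun i _ =>
      (hc (σ i)).zpow₀ (v i) (fun θ => Or.inl (hne θ (σ i)))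
  · refine continuous_finset_prod _ fun i _ => Continuous.mul ?_ ?_
    · exact (hc i).zpow₀ (-y i - 1) (fun θ => Or.inl (hne θ i))
    · refine Complex.continuous_exp.comp ?_
      refine continuous_const.mul ?_
      unfold eps
      exact ((hc i).add ((hc i).inv₀ (fun θ => hne θ i))).sub continuous_const


lemma prod_tail_swap {N j : ℕ} (hj : j + 1 < N) (x : Fin N → ℤ)
    (σ : Equiv.Perm (Fin N)) (ξ : Fin N → ℂ) :
    (∏ i ∈ (Finset.univ.erase (⟨j, Nat.lt_of_succ_lt hj⟩ : Fin N)).erase ⟨j+1, hj⟩,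
        ξ ((σ * Equiv.swap (⟨j, Nat.lt_of_succ_lt hj⟩ : Fin N) ⟨j+1, hj⟩) i) ^ x i)
      = ∏ i ∈ (Finset.univ.erase (⟨j, Nat.lt_of_succ_lt hj⟩ : Fin N)).erase ⟨j+1, hj⟩,
          ξ (σ i) ^ x i := by
  refine Finset.prod_congr rfl fun i hi => ?_
  obtain ⟨hi2, hi1⟩ := Finset.mem_erase.mp hi
  obtain ⟨hi1', _⟩ := Finset.mem_erase.mp hi1
  rw [Equiv.Perm.mul_apply, Equiv.swap_apply_of_ne_of_ne hi1' hi2]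

lemma Acoef_mul_swap {Δ : ℂ} {N j : ℕ} (hj : j + 1 < N) (σ : Equiv.Perm (Fin N))
    (hσ : σ ⟨j, Nat.lt_of_succ_lt hj⟩ < σ ⟨j+1, hj⟩) (ξ : Fin N → ℂ) :
    Acoef Δ (σ * Equiv.swap (⟨j, Nat.lt_of_succ_lt hj⟩ : Fin N) ⟨j+1, hj⟩) ξ
      = Smat Δ (ξ (σ ⟨j+1, hj⟩)) (ξ (σ ⟨j, Nat.lt_of_succ_lt hj⟩)) * Acoef Δ σ ξ := by
  unfold Acoef
  rw [filter_swap hj σ hσ, Finset.prod_insert (notmem_filter hj σ hσ)]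

lemma mul_swap_left {N j : ℕ} (hj : j + 1 < N) (σ : Equiv.Perm (Fin N)) :
    (σ * Equiv.swap (⟨j, Nat.lt_of_succ_lt hj⟩ : Fin N) ⟨j+1, hj⟩) ⟨j, Nat.lt_of_succ_lt hj⟩ = σ ⟨j+1, hj⟩ := by
  rw [Equiv.Perm.mul_apply, Equiv.swap_apply_left]

lemma mul_swap_right {N j : ℕ} (hj : j + 1 < N) (σ : Equiv.Perm (Fin N)) :
    (σ * Equiv.swap (⟨j, Nat.lt_of_succ_lt hj⟩ : Fin N) ⟨j+1, hj⟩) ⟨j+1, hj⟩ = σ ⟨j, Nat.lt_of_succ_lt hj⟩ := by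
  rw [Equiv.Perm.mul_apply, Equiv.swap_apply_right]

lemma pair_vanish {Δ r : ℝ} (hr : 0 < r) (hr1 : r ^ 2 + 2 * |Δ| * r < 1)
    {N j : ℕ} (hj : j + 1 < N) (y : Fin N → ℤ) (t : ℝ) (x : Fin N → ℤ) (a : ℤ)
    (σ : Equiv.Perm (Fin N)) (hσ : σ ⟨j, Nat.lt_of_succ_lt hj⟩ < σ ⟨j+1, hj⟩)
    (ξ : Fin N → ℂ) (hξ : ∀ i, ‖ξ i‖ = r) :
    (Fint Δ N y t σ (Function.update (Function.update x ⟨j, Nat.lt_of_succ_lt hj⟩ a) ⟨j+1, hj⟩ a) ξ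
      + Fint Δ N y t σ
          (Function.update (Function.update x ⟨j, Nat.lt_of_succ_lt hj⟩ (a+1)) ⟨j+1, hj⟩ (a+1)) ξ
      + (-(2*(Δ:ℂ))) * Fint Δ N y t σ
          (Function.update (Function.update x ⟨j, Nat.lt_of_succ_lt hj⟩ a) ⟨j+1, hj⟩ (a+1)) ξ)
    + (Fint Δ N y t (σ * Equiv.swap (⟨j, Nat.lt_of_succ_lt hj⟩ : Fin N) ⟨j+1, hj⟩)
          (Function.update (Function.update x ⟨j, Nat.lt_of_succ_lt hj⟩ a) ⟨j+1, hj⟩ a) ξ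
      + Fint Δ N y t (σ * Equiv.swap (⟨j, Nat.lt_of_succ_lt hj⟩ : Fin N) ⟨j+1, hj⟩)
          (Function.update (Function.update x ⟨j, Nat.lt_of_succ_lt hj⟩ (a+1)) ⟨j+1, hj⟩ (a+1)) ξ
      + (-(2*(Δ:ℂ))) * Fint Δ N y t (σ * Equiv.swap (⟨j, Nat.lt_of_succ_lt hj⟩ : Fin N) ⟨j+1, hj⟩)
          (Function.update (Function.update x ⟨j, Nat.lt_of_succ_lt hj⟩ a) ⟨j+1, hj⟩ (a+1)) ξ) = 0 := by
  have hζ : ξ (σ ⟨j, Nat.lt_of_succ_lt hj⟩) ≠ 0 := by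
    intro h0
    have := hξ (σ ⟨j, Nat.lt_of_succ_lt hj⟩)
    rw [h0, norm_zero] at this
    exact hr.ne' this.symm
  have hη : ξ (σ ⟨j+1, hj⟩) ≠ 0 := by
    intro h0
    have := hξ (σ ⟨j+1, hj⟩)
    rw [h0, norm_zero] at this
    exact hr.ne' this.symm
  have hD : 1 + ξ (σ ⟨j, Nat.lt_of_succ_lt hj⟩) * ξ (σ ⟨j+1, hj⟩)
      - 2 * (Δ:ℂ) * ξ (σ ⟨j, Nat.lt_of_succ_lt hj⟩) ≠ 0 :=
    hden hr hr1 (hξ _) (hξ _)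
  unfold Fint
  rw [Acoef_mul_swap hj σ hσ ξ]
  simp only [prod_update hj x σ ξ,
    prod_update hj x (σ * Equiv.swap (⟨j, Nat.lt_of_succ_lt hj⟩ : Fin N) ⟨j+1, hj⟩) ξ,
    mul_swap_left hj σ, mul_swap_right hj σ, prod_tail_swap hj x σ ξ]
  have hk := hkey (Δ := Δ) a hζ hη hD
  linear_combination (Acoef (Δ:ℂ) σ ξ *
    (∏ i ∈ (Finset.univ.erase (⟨j, Nat.lt_of_succ_lt hj⟩ : Fin N)).erase ⟨j+1, hj⟩, ξ (σ i) ^ x i) *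
    (∏ i, ξ i ^ (-y i - 1) * Complex.exp (-Complex.I * (t : ℂ) * eps Δ (ξ i)))) * hk

set_option maxHeartbeats 2000000 in
theorem stmt2 (Δ : ℝ) (N : ℕ) (hN : 2 ≤ N) (y : Fin N → ℤ) (hy : StrictMono y)
    (r : ℝ) (hr : 0 < r) (hr1 : r ^ 2 + 2 * |Δ| * r < 1)
    (t : ℝ) (x : Fin N → ℤ) (j : ℕ) (hj : j + 1 < N) (a : ℤ) :
    psi Δ N r y
        (Function.update (Function.update x ⟨j, by omega⟩ a) ⟨j + 1, hj⟩ a) t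
      + psi Δ N r y
        (Function.update (Function.update x ⟨j, by omega⟩ (a + 1)) ⟨j + 1, hj⟩ (a + 1)) t
      = 2 * (Δ : ℂ) * psi Δ N r y
        (Function.update (Function.update x ⟨j, by omega⟩ a) ⟨j + 1, hj⟩ (a + 1)) t := by
  classical
  have hne : (⟨j, by omega⟩ : Fin N) ≠ ⟨j + 1, hj⟩ := by simp [Fin.ext_iff]
  have hpsi : ∀ v : Fin N → ℤ, psi Δ N r y v t
      = ∑ σ : Equiv.Perm (Fin N), iterInt N (fun _ => cInt 0 r) (Fint Δ N y t σ v) :=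
    fun v => rfl
  have comb : ∀ (τ : Equiv.Perm (Fin N)) (v1 v2 v3 : Fin N → ℤ),
      iterInt N (fun _ => cInt 0 r) (fun ξ => Fint Δ N y t τ v1 ξ + Fint Δ N y t τ v2 ξ
          + (-(2 * (Δ:ℂ))) * Fint Δ N y t τ v3 ξ)
        = iterInt N (fun _ => cInt 0 r) (Fint Δ N y t τ v1)
          + iterInt N (fun _ => cInt 0 r) (Fint Δ N y t τ v2)
          + (-(2 * (Δ:ℂ))) * iterInt N (fun _ => cInt 0 r) (Fint Δ N y t τ v3) := by
    intro τ v1 v2 v3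
    rw [iterInt_add hr N _ _ ((contFint hr hr1 y t τ v1).add (contFint hr hr1 y t τ v2))
        (continuous_const.mul (contFint hr hr1 y t τ v3)),
      iterInt_add hr N _ _ (contFint hr hr1 y t τ v1) (contFint hr hr1 y t τ v2),
      iterInt_const_mul]
  have key : ∀ τ : Equiv.Perm (Fin N), τ ⟨j, by omega⟩ < τ ⟨j + 1, hj⟩ →
      (iterInt N (fun _ => cInt 0 r)
          (Fint Δ N y t τ (Function.update (Function.update x ⟨j, by omega⟩ a) ⟨j + 1, hj⟩ a))
        + iterInt N (fun _ => cInt 0 r)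
          (Fint Δ N y t τ
            (Function.update (Function.update x ⟨j, by omega⟩ (a+1)) ⟨j + 1, hj⟩ (a+1)))
        + (-(2 * (Δ:ℂ))) * iterInt N (fun _ => cInt 0 r)
          (Fint Δ N y t τ
            (Function.update (Function.update x ⟨j, by omega⟩ a) ⟨j + 1, hj⟩ (a+1))))
      + (iterInt N (fun _ => cInt 0 r)
          (Fint Δ N y t (τ * Equiv.swap (⟨j, by omega⟩ : Fin N) ⟨j + 1, hj⟩)
            (Function.update (Function.update x ⟨j, by omega⟩ a) ⟨j + 1, hj⟩ a))
        + iterInt N (fun _ => cInt 0 r)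
          (Fint Δ N y t (τ * Equiv.swap (⟨j, by omega⟩ : Fin N) ⟨j + 1, hj⟩)
            (Function.update (Function.update x ⟨j, by omega⟩ (a+1)) ⟨j + 1, hj⟩ (a+1)))
        + (-(2 * (Δ:ℂ))) * iterInt N (fun _ => cInt 0 r)
          (Fint Δ N y t (τ * Equiv.swap (⟨j, by omega⟩ : Fin N) ⟨j + 1, hj⟩)
            (Function.update (Function.update x ⟨j, by omega⟩ a) ⟨j + 1, hj⟩ (a+1)))) = 0 := by
    intro τ hlt
    rw [← comb τ, ← comb (τ * Equiv.swap (⟨j, by omega⟩ : Fin N) ⟨j + 1, hj⟩)]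
    have cτ : Continuous fun θ : Fin N → ℝ =>
        (fun ξ => Fint Δ N y t τ (Function.update (Function.update x ⟨j, by omega⟩ a) ⟨j + 1, hj⟩ a) ξ
          + Fint Δ N y t τ (Function.update (Function.update x ⟨j, by omega⟩ (a+1)) ⟨j + 1, hj⟩ (a+1)) ξ
          + (-(2 * (Δ:ℂ))) * Fint Δ N y t τ
              (Function.update (Function.update x ⟨j, by omega⟩ a) ⟨j + 1, hj⟩ (a+1)) ξ)
          (fun i => circleMap 0 r (θ i)) :=
      ((contFint hr hr1 y t τ _).add (contFint hr hr1 y t τ _)).add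
        (continuous_const.mul (contFint hr hr1 y t τ _))
    have cτs : Continuous fun θ : Fin N → ℝ =>
        (fun ξ => Fint Δ N y t (τ * Equiv.swap (⟨j, by omega⟩ : Fin N) ⟨j + 1, hj⟩)
              (Function.update (Function.update x ⟨j, by omega⟩ a) ⟨j + 1, hj⟩ a) ξ
          + Fint Δ N y t (τ * Equiv.swap (⟨j, by omega⟩ : Fin N) ⟨j + 1, hj⟩)
              (Function.update (Function.update x ⟨j, by omega⟩ (a+1)) ⟨j + 1, hj⟩ (a+1)) ξ
          + (-(2 * (Δ:ℂ))) * Fint Δ N y t (τ * Equiv.swap (⟨j, by omega⟩ : Fin N) ⟨j + 1, hj⟩)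
              (Function.update (Function.update x ⟨j, by omega⟩ a) ⟨j + 1, hj⟩ (a+1)) ξ)
          (fun i => circleMap 0 r (θ i)) :=
      ((contFint hr hr1 y t _ _).add (contFint hr hr1 y t _ _)).add
        (continuous_const.mul (contFint hr hr1 y t _ _))
    rw [← iterInt_add hr N _ _ cτ cτs,
      iterInt_congr hr N _ (fun _ => (0:ℂ))
        (fun ξ hξ => pair_vanish hr hr1 hj y t x a τ hlt ξ hξ)]
    exact iterInt_zero r N
  have hmulself : ∀ τ : Equiv.Perm (Fin N),
      τ * Equiv.swap (⟨j, by omega⟩ : Fin N) ⟨j + 1, hj⟩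
        * Equiv.swap (⟨j, by omega⟩ : Fin N) ⟨j + 1, hj⟩ = τ := by
    intro τ
    rw [mul_assoc, Equiv.swap_mul_self, mul_one]
  have main : psi Δ N r y
        (Function.update (Function.update x ⟨j, by omega⟩ a) ⟨j + 1, hj⟩ a) t
      + psi Δ N r y
        (Function.update (Function.update x ⟨j, by omega⟩ (a + 1)) ⟨j + 1, hj⟩ (a + 1)) t
      + (-(2 * (Δ:ℂ))) * psi Δ N r y
        (Function.update (Function.update x ⟨j, by omega⟩ a) ⟨j + 1, hj⟩ (a + 1)) t = 0 := by
    rw [hpsi, hpsi, hpsi, Finset.mul_sum, ← Finset.sum_add_distrib, ← Finset.sum_add_distrib]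
    refine Finset.sum_ninvolution
      (fun σ => σ * Equiv.swap (⟨j, by omega⟩ : Fin N) ⟨j + 1, hj⟩) ?_ ?_
      (fun σ => Finset.mem_univ _) hmulself
    · intro σ
      rcases lt_or_gt_of_ne (σ.injective.ne hne) with hlt | hgt
      · exact key σ hlt
      · have hlt' : (σ * Equiv.swap (⟨j, by omega⟩ : Fin N) ⟨j + 1, hj⟩) ⟨j, by omega⟩
            < (σ * Equiv.swap (⟨j, by omega⟩ : Fin N) ⟨j + 1, hj⟩) ⟨j + 1, hj⟩ := by
          rw [mul_swap_left hj σ, mul_swap_right hj σ]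
          exact hgt
        have h' := key (σ * Equiv.swap (⟨j, by omega⟩ : Fin N) ⟨j + 1, hj⟩) hlt'
        rw [hmulself σ] at h'
        linear_combination h'
    · intro σ _ hσ
      have h1 : σ * Equiv.swap (⟨j, by omega⟩ : Fin N) ⟨j + 1, hj⟩ = σ * 1 := by
        rw [mul_one]; exact hσ
      have h2 := mul_left_cancel h1
      have h3 := congrArg (fun e : Equiv.Perm (Fin N) => e ⟨j, by omega⟩) h2
      simp only [Equiv.swap_apply_left, Equiv.Perm.one_apply] at h3
      exact hne h3.symm
  linear_combination main
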